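/- Let S be a partially ordered monoid (pomonoid) and A a right S-poset. An S-act congruence ρ on A is an S-poset congruence (i.e., A/ρ admits a partial order making the quotient map an S-poset morphism) if and only if for all a,b ∈ A, a ≤_ρ b and b ≤_ρ a together imply a ρ b, where a ≤_ρ b means there exist n ≥ 1 and a₁,a₁',…,aₙ,aₙ' ∈ A with a ≤ a₁ ρ a₁' ≤ a₂ ρ a₂' ≤ ⋯ ≤ aₙ ρ aₙ' ≤ b. -/

import Mathlib

universe u v

/-- A pomonoid: the partial order is compatible with multiplication on both sides. -/
def IsPomonoid (S : Type*) [Monoid S] [PartialOrder S] : Prop :=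
  ∀ ⦃a b : S⦄, a ≤ b → ∀ c : S, a * c ≤ b * c ∧ c * a ≤ c * b

/-- A right `S`-poset structure on `A` given by the action `act`. -/
structure IsRightSPoset (S A : Type*) [Monoid S] [PartialOrder S] [PartialOrder A]
    (act : A → S → A) : Prop where
  act_one : ∀ a, act a 1 = a
  act_mul : ∀ a s t, act a (s * t) = act (act a s) t
  mono_act : ∀ {a b : A} (s : S), a ≤ b → act a s ≤ act b s
  act_mono : ∀ (a : A) {s t : S}, s ≤ t → act a s ≤ act a t

/-- A left `S`-poset structure on `A` given by the action `act`. -/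
structure IsLeftSPoset (S A : Type*) [Monoid S] [PartialOrder S] [PartialOrder A]
    (act : S → A → A) : Prop where
  one_act : ∀ a, act 1 a = a
  mul_act : ∀ s t a, act (s * t) a = act s (act t a)
  mono_act : ∀ {a b : A} (s : S), a ≤ b → act s a ≤ act s b
  act_mono : ∀ (a : A) {s t : S}, s ≤ t → act s a ≤ act t a

/-- The scheme relation defining the order on the tensor product `X ⊗_U Y`, at the level of
representatives: `TLe leX leY aX aY (x, y) (x', y')` holds precisely when there is a finite
scheme `x ≤ x₁s₁`, `s₁y ≤ t₁y₂`, `x₁t₁ ≤ x₂s₂`, `s₂y₂ ≤ t₂y₃`, …, `sₙyₙ ≤ tₙy'`,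
`xₙtₙ ≤ x'`. -/
inductive TLe {U X Y : Type*} (leX : X → X → Prop) (leY : Y → Y → Prop)
    (aX : X → U → X) (aY : U → Y → Y) : X × Y → X × Y → Prop
  | base : ∀ (p q : X × Y) (x₁ : X) (s t : U),
      leX p.1 (aX x₁ s) → leY (aY s p.2) (aY t q.2) → leX (aX x₁ t) q.1 →
      TLe leX leY aX aY p q
  | step : ∀ (p q : X × Y) (x₁ : X) (s t : U) (y₂ : Y),
      leX p.1 (aX x₁ s) → leY (aY s p.2) (aY t y₂) →
      TLe leX leY aX aY (aX x₁ t, y₂) q → TLe leX leY aX aY p q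

/-- Equality of two representatives in the tensor product. -/
def TEquiv {U X Y : Type*} (leX : X → X → Prop) (leY : Y → Y → Prop)
    (aX : X → U → X) (aY : U → Y → Y) (p q : X × Y) : Prop :=
  TLe leX leY aX aY p q ∧ TLe leX leY aX aY q p

/-- The order induced on a quotient by a relation `le` on representatives. -/
def QuotLe {α : Type*} (r : α → α → Prop) (le : α → α → Prop) (x y : Quot r) : Prop :=
  ∃ p q : α, Quot.mk r p = x ∧ Quot.mk r q = y ∧ le p q

/-- `ChainLe le ρ a b` expresses `a ≤ a₁ ρ a₁' ≤ a₂ ρ a₂' ≤ ⋯ ≤ aₙ ρ aₙ' ≤ b`. -/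
inductive ChainLe {F : Type*} (le ρ : F → F → Prop) : F → F → Prop
  | base : ∀ {a b : F}, le a b → ChainLe le ρ a b
  | step : ∀ {a b : F} (d d' : F), le a d → ρ d d' → ChainLe le ρ d' b → ChainLe le ρ a b

/-- The relation `α(R)` induced by `R` on a right `S`-act:
`a α(R) b` iff `a = b` or `a = x₁s₁`, `x₁'s₁ = x₂s₂`, …, `xₙ'sₙ = b` with `(xᵢ, xᵢ') ∈ R`. -/
inductive AlphaRel {S F : Type*} (act : F → S → F) (R : F → F → Prop) : F → F → Prop
  | refl : ∀ a, AlphaRel act R a a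
  | step : ∀ (x x' : F) (s : S) (b : F), R x x' → AlphaRel act R (act x' s) b →
      AlphaRel act R (act x s) b

lemma chainle_rho_trans {F : Type*} {le ρ : F → F → Prop} {a b b' c : F}
    (h1 : ChainLe le ρ a b) (h2 : ρ b b') (h3 : ChainLe le ρ b' c) :
    ChainLe le ρ a c := by
  induction h1 with
  | base h => exact ChainLe.step _ _ h h2 h3
  | step d d' hle hρ _ ih => exact ChainLe.step d d' hle hρ (ih h2)

lemma chainle_act {S A : Type*} [Monoid S] [PartialOrder S] [PartialOrder A]
    {act : A → S → A} (hA : IsRightSPoset S A act) {ρ : A → A → Prop}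
    (hcong : ∀ a b s, ρ a b → ρ (act a s) (act b s)) {a b : A} (s : S)
    (h : ChainLe (· ≤ ·) ρ a b) : ChainLe (· ≤ ·) ρ (act a s) (act b s) := by
  induction h with
  | base h => exact ChainLe.base (hA.mono_act s h)
  | step d d' hle hρ _ ih =>
      exact ChainLe.step (act d s) (act d' s) (hA.mono_act s hle) (hcong _ _ s hρ) ih

/-- an `S`-act congruence `ρ` on a right `S`-poset `A` is an `S`-poset congruence
(i.e. `A/ρ` admits a partial order making it an `S`-poset and the quotient map an `S`-poset
morphism) iff `a ≤_ρ b` and `b ≤_ρ a` imply `a ρ b`. -/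
theorem stmt_0 {S A : Type u} [Monoid S] [PartialOrder S] [PartialOrder A]
    (hS : IsPomonoid S) (act : A → S → A) (hA : IsRightSPoset S A act)
    (ρ : Setoid A) (hcong : ∀ a b s, ρ.r a b → ρ.r (act a s) (act b s)) :
    (∃ (po : PartialOrder (Quotient ρ)) (act' : Quotient ρ → S → Quotient ρ),
      (∀ a s, act' (Quotient.mk ρ a) s = Quotient.mk ρ (act a s)) ∧
      @IsRightSPoset S (Quotient ρ) _ _ po act' ∧
      ∀ a b : A, a ≤ b → po.le (Quotient.mk ρ a) (Quotient.mk ρ b)) ↔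
    ∀ a b : A, ChainLe (· ≤ ·) ρ.r a b → ChainLe (· ≤ ·) ρ.r b a → ρ.r a b := by
  constructor
  · rintro ⟨po, act', hact', hpos, hmono⟩ a b h1 h2
    have key : ∀ {x y : A}, ChainLe (· ≤ ·) ρ.r x y →
        po.le (Quotient.mk ρ x) (Quotient.mk ρ y) := by
      intro x y h
      induction h with
      | base h => exact hmono _ _ h
      | step d d' hle hρ _ ih =>
          refine po.le_trans _ _ _ (hmono _ _ hle) ?_
          have : Quotient.mk ρ d = Quotient.mk ρ d' := Quotient.sound hρ
          rw [this]; exact ih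
    exact Quotient.exact (po.le_antisymm _ _ (key h1) (key h2))
  · intro hyp
    set C : A → A → Prop := ChainLe (· ≤ ·) ρ.r with hC
    have Crefl : ∀ a, C a a := fun a => ChainLe.base (le_refl a)
    have Cρ : ∀ {a a' b : A}, ρ.r a a' → C a' b → C a b := fun h hc =>
      ChainLe.step _ _ (le_refl _) h hc
    have Cρ' : ∀ {a b b' : A}, C a b → ρ.r b b' → C a b' := fun hc h =>
      chainle_rho_trans hc h (Crefl _)
    let le' : Quotient ρ → Quotient ρ → Prop := fun x y =>
      ∃ a b : A, Quotient.mk ρ a = x ∧ Quotient.mk ρ b = y ∧ C a b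
    have le'_mk : ∀ {a b : A}, le' (Quotient.mk ρ a) (Quotient.mk ρ b) ↔ C a b := by
      intro a b
      constructor
      · rintro ⟨a', b', ha, hb, h⟩
        exact Cρ (Quotient.exact ha.symm) (Cρ' h (Quotient.exact hb))
      · intro h; exact ⟨a, b, rfl, rfl, h⟩
    have le'_refl : ∀ x, le' x x := by
      intro x; induction x using Quotient.ind with
      | _ a => exact ⟨a, a, rfl, rfl, Crefl a⟩
    have le'_trans : ∀ x y z, le' x y → le' y z → le' x z := by
      rintro x y z ⟨a, b, ha, hb, h1⟩ ⟨b', c, hb', hc, h2⟩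
      refine ⟨a, c, ha, hc, ?_⟩
      exact chainle_rho_trans h1 (Quotient.exact (hb.trans hb'.symm)) h2
    have le'_antisymm : ∀ x y, le' x y → le' y x → x = y := by
      rintro x y ⟨a, b, ha, hb, h1⟩ ⟨b', a', hb', ha', h2⟩
      have h2' : C b a := Cρ (Quotient.exact (hb.trans hb'.symm))
        (Cρ' h2 (Quotient.exact (ha'.trans ha.symm)))
      rw [← ha, ← hb]
      exact Quotient.sound (hyp a b h1 h2')
    let po : PartialOrder (Quotient ρ) :=
      { le := le', lt := fun x y => le' x y ∧ ¬ le' y x, le_refl := le'_refl, le_trans := le'_trans,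
        le_antisymm := le'_antisymm }
    let act' : Quotient ρ → S → Quotient ρ := fun x s =>
      Quotient.map (fun a => act a s) (fun a b h => hcong a b s h) x
    have hact' : ∀ a s, act' (Quotient.mk ρ a) s = Quotient.mk ρ (act a s) :=
      fun a s => rfl
    refine ⟨po, act', hact', ?_, ?_⟩
    · constructor
      · intro x; induction x using Quotient.ind with
        | _ a => show Quotient.mk ρ (act a 1) = _; rw [hA.act_one]
      · intro x s t; induction x using Quotient.ind with
        | _ a => show Quotient.mk ρ (act a (s * t)) = Quotient.mk ρ (act (act a s) t)
                 rw [hA.act_mul]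
      · intro x y s hxy
        obtain ⟨a, b, ha, hb, h⟩ := hxy
        subst ha; subst hb
        exact (le'_mk).mpr (chainle_act hA (fun a b s h => hcong a b s h) s h)
      · intro x s t hst; induction x using Quotient.ind with
        | _ a =>
          exact (le'_mk).mpr (ChainLe.base (hA.act_mono a hst))
    · intro a b h
      exact (le'_mk).mpr (ChainLe.base h)
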